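/- arXiv:2109.13092 — 4 statements merged into one kernel-verified Lean document; each statement's English description precedes it below -/
import Mathlib

section
/- Let F be a division ring and R = F[x;σ,δ] an Ore extension. Then R is a left principal ideal domain: every left ideal I of R is of the form R·g for some g ∈ R. -/
variable {F R : Type*}

/-- Degree of a skew polynomial: the sup of the support of its coordinates
in the basis of powers of `X` (degree of `0` is `0` by convention). -/
noncomputable def deg [DivisionRing F] [Ring R] [Module F R]
    (b : Module.Basis ℕ F R) (f : R) : ℕ := (b.repr f).support.sup id

section Aux

variable [DivisionRing F] [Ring R] [Module F R]
    (σ : F →+* F) (δ : F →+ F)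
    (i : F →+* R) (X : R)
    (hsmul : ∀ (a : F) (r : R), a • r = i a * r)
    (b : Module.Basis ℕ F R) (hb : ∀ n : ℕ, b n = X ^ n)
    (hcomm : ∀ a : F, X * i a = i (σ a) * X + i (δ a))

lemma aux_le_deg {f : R} {n : ℕ} (hn : n ∈ (b.repr f).support) : n ≤ deg b f :=
  Finset.le_sup (f := id) hn

lemma aux_coeff_eq_zero {f : R} {n : ℕ} (hn : deg b f < n) : b.repr f n = 0 := by
  by_contra h
  exact absurd (aux_le_deg b (Finsupp.mem_support_iff.mpr h)) (not_le.mpr hn)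

lemma aux_lc_ne_zero {f : R} (hf : f ≠ 0) : b.repr f (deg b f) ≠ 0 := by
  have h0 : b.repr f ≠ 0 := fun h => hf (by simpa using congrArg b.repr.symm h)
  have hs : (b.repr f).support.Nonempty := Finsupp.support_nonempty_iff.mpr h0
  obtain ⟨n, hn, he⟩ := Finset.exists_mem_eq_sup _ hs (id : ℕ → ℕ)
  have : deg b f ∈ (b.repr f).support := by rw [deg, he]; exact hn
  exact Finsupp.mem_support_iff.mp this

lemma aux_deg_le {f : R} {N : ℕ} (h : ∀ n, N < n → b.repr f n = 0) : deg b f ≤ N := by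
  apply Finset.sup_le
  intro n hn
  by_contra hc
  exact Finsupp.mem_support_iff.mp hn (h n (by simpa using not_le.mp hc))

include hsmul hb in
lemma aux_repr_smul_pow (a : F) (n : ℕ) : b.repr (a • X ^ n) = Finsupp.single n a := by
  rw [← hb, map_smul, b.repr_self, Finsupp.smul_single, smul_eq_mul, mul_one]

include hsmul hcomm in
lemma aux_X_mul_smul_pow (a : F) (n : ℕ) :
    X * (a • X ^ n) = σ a • X ^ (n + 1) + δ a • X ^ n := by
  rw [hsmul, ← mul_assoc, hcomm, add_mul, hsmul, hsmul, mul_assoc, ← pow_succ']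

include hb in
lemma aux_expand (f : R) :
    f = ∑ n ∈ (b.repr f).support, (b.repr f n) • X ^ n := by
  conv_lhs => rw [← b.linearCombination_repr f]
  rw [Finsupp.linearCombination_apply, Finsupp.sum]
  exact Finset.sum_congr rfl fun n _ => by rw [hb]

include hsmul hb hcomm in
lemma aux_repr_X_mul (f : R) (m : ℕ) :
    b.repr (X * f) m = ∑ n ∈ (b.repr f).support,
      ((if n + 1 = m then σ (b.repr f n) else 0) + (if n = m then δ (b.repr f n) else 0)) := by
  conv_lhs => rw [aux_expand X b hb f]
  rw [Finset.mul_sum, map_sum, Finsupp.finset_sum_apply]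
  refine Finset.sum_congr rfl fun n _ => ?_
  rw [aux_X_mul_smul_pow σ δ i X hsmul hcomm, map_add,
    aux_repr_smul_pow i X hsmul b hb, aux_repr_smul_pow i X hsmul b hb,
    Finsupp.add_apply, Finsupp.single_apply, Finsupp.single_apply]

include hsmul hb hcomm in
lemma aux_X_mul {f : R} (hf : f ≠ 0) :
    X * f ≠ 0 ∧ deg b (X * f) = deg b f + 1 := by
  set D := deg b f with hD
  have hlc : b.repr f D ≠ 0 := aux_lc_ne_zero b hf
  have htop : b.repr (X * f) (D + 1) = σ (b.repr f D) := by
    rw [aux_repr_X_mul σ δ i X hsmul b hb hcomm]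
    rw [Finset.sum_eq_single D]
    · have h1 : (if D + 1 = D + 1 then σ (b.repr f D) else 0) = σ (b.repr f D) := if_pos rfl
      have h2 : (if D = D + 1 then δ (b.repr f D) else 0) = 0 := if_neg (by omega)
      rw [h1, h2, add_zero]
    · intro n hn hne
      have hle : n ≤ D := aux_le_deg b hn
      rw [if_neg (by omega), if_neg (by omega), add_zero]
    · intro h
      exact absurd (Finsupp.mem_support_iff.mpr hlc) h
  have hσ : σ (b.repr f D) ≠ 0 :=
    fun h => hlc (σ.injective (h.trans (map_zero σ).symm))
  have hne : b.repr (X * f) (D + 1) ≠ 0 := htop ▸ hσ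
  have hXf : X * f ≠ 0 := fun h => hne (by rw [h, map_zero]; rfl)
  refine ⟨hXf, le_antisymm ?_ ?_⟩
  · apply aux_deg_le
    intro m hm
    rw [aux_repr_X_mul σ δ i X hsmul b hb hcomm]
    apply Finset.sum_eq_zero
    intro n hn
    have hle : n ≤ D := aux_le_deg b hn
    rw [if_neg (by omega), if_neg (by omega), add_zero]
  · exact aux_le_deg b (Finsupp.mem_support_iff.mpr hne)

include hsmul hb hcomm in
lemma aux_pow_mul {g : R} (hg : g ≠ 0) (k : ℕ) :
    X ^ k * g ≠ 0 ∧ deg b (X ^ k * g) = k + deg b g := by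
  induction k with
  | zero => simpa using hg
  | succ k ih =>
    have h := aux_X_mul σ δ i X hsmul b hb hcomm ih.1
    rw [pow_succ', mul_assoc]
    exact ⟨h.1, by rw [h.2, ih.2]; omega⟩

lemma aux_smul_ne {c : F} {h : R} (hc : c ≠ 0) (hh : h ≠ 0) :
    c • h ≠ 0 ∧ deg b (c • h) = deg b h ∧
      b.repr (c • h) (deg b h) = c * b.repr h (deg b h) := by
  have hrepr : ∀ m, b.repr (c • h) m = c * b.repr h m := by
    intro m; rw [map_smul]; rfl
  have hne : c • h ≠ 0 := by
    intro h0
    exact aux_lc_ne_zero b hh (by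
      have := hrepr (deg b h)
      rw [h0, map_zero] at this
      have : (0 : F) = c * b.repr h (deg b h) := this
      exact (mul_eq_zero.mp this.symm).resolve_left hc)
  refine ⟨hne, le_antisymm ?_ ?_, hrepr _⟩
  · exact aux_deg_le b fun n hn => by
      rw [hrepr, aux_coeff_eq_zero b hn, mul_zero]
  · apply aux_le_deg b
    rw [Finsupp.mem_support_iff, hrepr]
    exact mul_ne_zero hc (aux_lc_ne_zero b hh)

lemma aux_cancel {f h : R} {N : ℕ} (hf : deg b f ≤ N) (hh : deg b h ≤ N)
    (he : b.repr f N = b.repr h N) : f = h ∨ deg b (f - h) < N := by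
  by_cases hfh : f = h
  · exact Or.inl hfh
  right
  have hne : f - h ≠ 0 := sub_ne_zero_of_ne hfh
  have hkey : ∀ n ∈ (b.repr (f - h)).support, n < N := by
    intro n hn
    have hval : b.repr f n - b.repr h n ≠ 0 := by
      rw [Finsupp.mem_support_iff] at hn
      rwa [map_sub, Finsupp.sub_apply] at hn
    rcases lt_trichotomy n N with h1 | h1 | h1
    · exact h1
    · exact absurd (by rw [h1, he, sub_self]) hval
    · exact absurd (by rw [aux_coeff_eq_zero b (lt_of_le_of_lt hf h1),
        aux_coeff_eq_zero b (lt_of_le_of_lt hh h1), sub_self]) hval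
  have hsupp : (b.repr (f - h)).support.Nonempty := by
    apply Finsupp.support_nonempty_iff.mpr
    intro h0
    exact hne (by simpa using congrArg b.repr.symm h0)
  obtain ⟨n, hn⟩ := hsupp
  have hN : 0 < N := lt_of_le_of_lt (Nat.zero_le n) (hkey n hn)
  exact (Finset.sup_lt_iff hN).mpr fun m hm => hkey m hm

end Aux

/-- An Ore extension over a division ring is a left principal ideal domain:
every left ideal is of the form `R·g`. -/
theorem skew_left_PID [DivisionRing F] [Ring R] [Module F R]
    (σ : F →+* F) (δ : F →+ F)
    (hδ : ∀ a b : F, δ (a * b) = σ a * δ b + δ a * b)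
    (i : F →+* R) (X : R)
    (hsmul : ∀ (a : F) (r : R), a • r = i a * r)
    (b : Module.Basis ℕ F R) (hb : ∀ n : ℕ, b n = X ^ n)
    (hcomm : ∀ a : F, X * i a = i (σ a) * X + i (δ a))
    (I : Ideal R) :
    ∃ g : R, I = Ideal.span {g} := by
  classical
  by_cases hI : I = ⊥
  · exact ⟨0, by rw [hI]; exact (Submodule.span_zero_singleton R).symm⟩
  obtain ⟨f0, hf0I, hf00⟩ := Submodule.exists_mem_ne_zero_of_ne_bot hI
  set P : ℕ → Prop := fun n => ∃ f ∈ I, f ≠ 0 ∧ deg b f = n with hP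
  have hPne : ∃ n, P n := ⟨deg b f0, f0, hf0I, hf00, rfl⟩
  set m := Nat.find hPne with hm
  obtain ⟨g, hgI, hg0, hgdeg⟩ := Nat.find_spec hPne
  refine ⟨g, le_antisymm ?_ ?_⟩
  · -- I ≤ span {g}
    intro f hfI
    by_cases hf0 : f = 0
    · simp [hf0]
    suffices H : ∀ n : ℕ, ∀ f, f ∈ I → f ≠ 0 → deg b f = n → f ∈ Ideal.span ({g} : Set R) by
      exact H (deg b f) f hfI hf0 rfl
    intro n
    induction n using Nat.strong_induction_on with
    | _ n ih =>
      intro f hfI hf0 hdeg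
      have hmle : m ≤ deg b f := Nat.find_min' hPne ⟨f, hfI, hf0, rfl⟩
      have hgle : deg b g ≤ deg b f := hgdeg ▸ hmle
      set k := deg b f - deg b g with hk
      have hpow := aux_pow_mul σ δ i X hsmul b hb hcomm hg0 k
      set h := X ^ k * g with hh
      have hdegh : deg b h = deg b f := by rw [hpow.2]; omega
      set c := b.repr f (deg b f) * (b.repr h (deg b h))⁻¹ with hc
      have hlch : b.repr h (deg b h) ≠ 0 := aux_lc_ne_zero b hpow.1
      have hcne : c ≠ 0 :=
        mul_ne_zero (aux_lc_ne_zero b hf0) (inv_ne_zero hlch)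
      have hsm := aux_smul_ne b hcne hpow.1
      have hcoef : b.repr (c • h) (deg b f) = b.repr f (deg b f) := by
        rw [← hdegh, hsm.2.2, hc, mul_assoc, inv_mul_cancel₀ hlch, mul_one, hdegh]
      have hdegch : deg b (c • h) ≤ deg b f := by rw [hsm.2.1, hdegh]
      have hchI : c • h ∈ I := by
        have : c • h = (i c * X ^ k) • g := by
          rw [hsmul, smul_eq_mul, hh, mul_assoc]
        rw [this]
        exact I.smul_mem _ hgI
      have hchspan : c • h ∈ Ideal.span ({g} : Set R) := by
        apply Submodule.mem_span_singleton.mpr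
        exact ⟨i c * X ^ k, by rw [smul_eq_mul, mul_assoc, ← hh, ← hsmul]⟩
      rcases aux_cancel b le_rfl hdegch hcoef.symm with heq | hlt
      · rw [heq]; exact hchspan
      · set f' := f - c • h with hf'
        have hf'I : f' ∈ I := Submodule.sub_mem I hfI hchI
        by_cases hf'0 : f' = 0
        · have : f = c • h := by
            have := sub_eq_zero.mp hf'0; exact this
          rw [this]; exact hchspan
        · have hf'span : f' ∈ Ideal.span ({g} : Set R) :=
            ih (deg b f') (hdeg ▸ hlt) f' hf'I hf'0 rfl
          have : f = f' + c • h := by rw [hf']; abel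
          rw [this]
          exact Submodule.add_mem _ hf'span hchspan
  · -- span {g} ≤ I
    rw [Ideal.span_le]
    simpa using hgI
end

section
/- Let F be a division ring, R = F[x;σ,δ], and f, g ∈ R non-constant. If h, k ∈ R satisfy Rf ∩ Rg = Rh and Rf + Rg = Rk, then deg(f) + deg(g) = deg(h) + deg(k). -/
variable {F R : Type*}

set_option linter.unusedSectionVars false
set_option linter.unusedVariables false

section Aux
variable [DivisionRing F] [Ring R] [Module F R] (b : Module.Basis ℕ F R)

lemma repr_deg_ne_zero {p : R} (hp : p ≠ 0) : b.repr p (deg b p) ≠ 0 := by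
  have hs : (b.repr p).support.Nonempty := by
    rw [Finsupp.support_nonempty_iff]; simpa using hp
  obtain ⟨m, hm, hms⟩ := Finset.exists_mem_eq_sup _ hs id
  rw [deg, hms]
  exact Finsupp.mem_support_iff.mp hm

lemma deg_le_iff {p : R} {n : ℕ} : deg b p ≤ n ↔ ∀ m, n < m → b.repr p m = 0 := by
  rw [deg, Finset.sup_le_iff]
  simp only [id_eq, Finsupp.mem_support_iff]
  constructor
  · intro H m hm
    by_contra h
    exact absurd (H m h) (by omega)
  · intro H m hm
    by_contra h
    exact hm (H m (by omega))

lemma coeff_eq_zero_of_deg_lt {p : R} {m : ℕ} (h : deg b p < m) : b.repr p m = 0 :=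
  (deg_le_iff b).mp le_rfl m h

lemma deg_eq_of {p : R} {n : ℕ} (h1 : b.repr p n ≠ 0)
    (h2 : ∀ m, n < m → b.repr p m = 0) : deg b p = n := by
  have hle : deg b p ≤ n := (deg_le_iff b).mpr h2
  have : n ≤ deg b p := Finset.le_sup (f := id) (Finsupp.mem_support_iff.mpr h1)
  omega

end Aux

section Mul
variable [DivisionRing F] [Ring R] [Module F R]
variable (σ : F →+* F) (δ : F →+ F) (i : F →+* R) (X : R) (b : Module.Basis ℕ F R)
variable (hsmul : ∀ (a : F) (r : R), a • r = i a * r)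
variable (hb : ∀ n : ℕ, b n = X ^ n)
variable (hcomm : ∀ a : F, X * i a = i (σ a) * X + i (δ a))

include hsmul hb hcomm in
lemma coeff_X_mul (p : R) (t : ℕ) :
    b.repr (X * p) (t + 1) = σ (b.repr p t) + δ (b.repr p (t + 1)) := by
  conv_lhs => rw [← b.linearCombination_repr p]
  rw [Finsupp.linearCombination_apply, Finsupp.sum, Finset.mul_sum]
  have step : ∀ m ∈ (b.repr p).support, X * (b.repr p m • b m)
      = σ (b.repr p m) • b (m+1) + δ (b.repr p m) • b m := by
    intro m _
    rw [hsmul, hb, ← mul_assoc, hcomm, add_mul, mul_assoc, ← pow_succ',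
        ← hb, ← hb, ← hsmul, ← hsmul]
  rw [Finset.sum_congr rfl step, map_sum]
  simp only [map_add, map_smul, Module.Basis.repr_self, Finsupp.smul_single, smul_eq_mul,
    mul_one, Finset.sum_apply', Finsupp.add_apply, Finsupp.single_apply]
  rw [Finset.sum_add_distrib]
  congr 1
  · simp only [Nat.add_right_cancel_iff]
    rw [Finset.sum_ite_eq' (b.repr p).support t (fun m => σ (b.repr p m))]
    by_cases ht : t ∈ (b.repr p).support
    · simp [ht]
    · simp [ht, Finsupp.notMem_support_iff.mp ht]
  · rw [Finset.sum_ite_eq' (b.repr p).support (t+1) (fun m => δ (b.repr p m))]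
    by_cases ht : t + 1 ∈ (b.repr p).support
    · simp [ht]
    · simp [ht, Finsupp.notMem_support_iff.mp ht]

include hsmul hb hcomm in
lemma deg_X_mul {p : R} (hp : p ≠ 0) :
    deg b (X * p) = deg b p + 1 ∧
      b.repr (X * p) (deg b p + 1) = σ (b.repr p (deg b p)) := by
  have hc : b.repr (X * p) (deg b p + 1) = σ (b.repr p (deg b p)) := by
    rw [coeff_X_mul σ δ i X b hsmul hb hcomm,
      coeff_eq_zero_of_deg_lt (p := p) (m := deg b p + 1) b (by omega),
      map_zero, add_zero]
  have hne : σ (b.repr p (deg b p)) ≠ 0 := fun h =>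
    repr_deg_ne_zero b hp (σ.injective (by rw [h, map_zero]))
  refine ⟨deg_eq_of b (hc ▸ hne) ?_, hc⟩
  intro m hm
  obtain ⟨t, rfl⟩ : ∃ t, m = t + 1 := ⟨m - 1, by omega⟩
  rw [coeff_X_mul σ δ i X b hsmul hb hcomm,
    coeff_eq_zero_of_deg_lt b (by omega), coeff_eq_zero_of_deg_lt b (by omega),
    map_zero, map_zero, add_zero]

include hsmul hb hcomm in
lemma deg_Xpow_mul {p : R} (hp : p ≠ 0) (n : ℕ) :
    deg b (X ^ n * p) = n + deg b p ∧ b.repr (X ^ n * p) (n + deg b p) ≠ 0 := by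
  induction n with
  | zero => simpa using repr_deg_ne_zero b hp
  | succ n ih =>
    have hq : X ^ n * p ≠ 0 := fun h => ih.2 (by rw [h, map_zero]; rfl)
    rw [pow_succ', mul_assoc]
    obtain ⟨h1, h2⟩ := deg_X_mul σ δ i X b hsmul hb hcomm hq
    have e : n + 1 + deg b p = deg b (X ^ n * p) + 1 := by omega
    refine ⟨by omega, ?_⟩
    rw [e, h2, ih.1]
    exact fun h => ih.2 (σ.injective (by rw [h, map_zero]))

include hsmul hb hcomm in
lemma coeff_mul (f r : R) (t : ℕ) :
    b.repr (r * f) t = ∑ n ∈ (b.repr r).support, b.repr r n * b.repr (X ^ n * f) t := by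
  conv_lhs => rw [← b.linearCombination_repr r]
  rw [Finsupp.linearCombination_apply, Finsupp.sum, Finset.sum_mul]
  have step : ∀ n ∈ (b.repr r).support, (b.repr r n • b n) * f
      = b.repr r n • (X ^ n * f) := by
    intro n _
    rw [hsmul, hb, mul_assoc, ← hsmul]
  rw [Finset.sum_congr rfl step, map_sum]
  simp only [map_smul, Finset.sum_apply', Finsupp.smul_apply, smul_eq_mul]

include hsmul hb hcomm in
lemma deg_mul {f r : R} (hf : f ≠ 0) (hr : r ≠ 0) :
    deg b (r * f) = deg b r + deg b f ∧
      b.repr (r * f) (deg b r + deg b f) ≠ 0 := by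
  have key : ∀ t, deg b r + deg b f ≤ t →
      b.repr (r * f) t = b.repr r (deg b r) * b.repr (X ^ (deg b r) * f) t := by
    intro t ht
    rw [coeff_mul σ δ i X b hsmul hb hcomm]
    apply Finset.sum_eq_single
    · intro n hn hne
      have hnle : n ≤ deg b r := Finset.le_sup (f := id) hn
      have : deg b (X ^ n * f) < t := by
        rw [(deg_Xpow_mul σ δ i X b hsmul hb hcomm hf n).1]
        omega
      rw [coeff_eq_zero_of_deg_lt b this, mul_zero]
    · intro hn
      rw [Finsupp.notMem_support_iff.mp hn, zero_mul]
  have hlead : b.repr (r * f) (deg b r + deg b f) ≠ 0 := by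
    rw [key _ le_rfl]
    exact mul_ne_zero (repr_deg_ne_zero b hr)
      ((deg_Xpow_mul σ δ i X b hsmul hb hcomm hf (deg b r)).1 ▸
        (deg_Xpow_mul σ δ i X b hsmul hb hcomm hf (deg b r)).2)
  refine ⟨deg_eq_of b hlead ?_, hlead⟩
  intro m hm
  rw [key m (by omega)]
  have hdeg : deg b (X ^ deg b r * f) < m := by
    rw [(deg_Xpow_mul σ δ i X b hsmul hb hcomm hf _).1]; omega
  rw [coeff_eq_zero_of_deg_lt b hdeg, mul_zero]

end Mul

section Codim
variable [DivisionRing F] [Ring R] [Module F R]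
variable (σ : F →+* F) (δ : F →+ F) (i : F →+* R) (X : R) (b : Module.Basis ℕ F R)
variable (hsmul : ∀ (a : F) (r : R), a • r = i a * r)
variable (hb : ∀ n : ℕ, b n = X ^ n)
variable (hcomm : ∀ a : F, X * i a = i (σ a) * X + i (δ a))

/-- The `F`-submodule underlying a left ideal of `R`. -/
def idealToF (i : F →+* R) (hsmul : ∀ (a : F) (r : R), a • r = i a * r)
    (I : Ideal R) : Submodule F R where
  carrier := I
  add_mem' := fun ha hb => I.add_mem ha hb
  zero_mem' := I.zero_mem
  smul_mem' := fun a r hr => by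
    simp only [SetLike.mem_coe] at hr ⊢
    rw [hsmul]
    exact I.mul_mem_left (i a) hr

lemma mem_idealToF {I : Ideal R} {x : R} : x ∈ idealToF i hsmul I ↔ x ∈ I := Iff.rfl

include hb hcomm in
lemma span_isCompl {p : R} (hp : p ≠ 0) :
    IsCompl (idealToF i hsmul (Ideal.span {p}))
      (Submodule.span F (b '' Set.Iio (deg b p))) := by
  constructor
  · rw [disjoint_iff, eq_bot_iff]
    rintro x ⟨hx1, hx2⟩
    simp only [SetLike.mem_coe] at hx1 hx2
    simp only [Submodule.mem_bot]
    by_contra hx0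
    obtain ⟨r, hr⟩ := Submodule.mem_span_singleton.mp ((mem_idealToF i hsmul).mp hx1)
    rw [smul_eq_mul] at hr
    have hrne : r ≠ 0 := by rintro rfl; rw [zero_mul] at hr; exact hx0 hr.symm
    have hd : deg b x = deg b r + deg b p := by
      rw [← hr]; exact (deg_mul σ δ i X b hsmul hb hcomm hp hrne).1
    have hsupp := b.mem_span_image.mp hx2
    have : deg b x ∈ (b.repr x).support :=
      Finsupp.mem_support_iff.mpr (repr_deg_ne_zero b hx0)
    have := hsupp this
    simp only [Set.mem_Iio] at this
    omega
  · rw [codisjoint_iff, eq_top_iff]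
    intro x _
    set S := idealToF i hsmul (Ideal.span {p}) with hS
    set W := Submodule.span F (b '' Set.Iio (deg b p)) with hW
    set m := deg b p with hm
    have main : ∀ d : ℕ, ∀ x : R, deg b x < d → x ∈ S ⊔ W := by
      intro d
      induction d with
      | zero => intro x hx; omega
      | succ d ih =>
        intro x hx
        by_cases hx0 : x = 0
        · rw [hx0]; exact Submodule.zero_mem _
        by_cases hem : deg b x < m
        · refine Submodule.mem_sup_right (b.mem_span_image.mpr ?_)
          intro n hn
          have hnle : n ≤ deg b x := Finset.le_sup (f := id) hn
          exact Set.mem_Iio.mpr (by omega)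
        · push_neg at hem
          set e := deg b x with he
          set w := b.repr (X ^ (e - m) * p) e with hwdef
          obtain ⟨hdw, hwne⟩ := deg_Xpow_mul σ δ i X b hsmul hb hcomm hp (e - m)
          rw [Nat.sub_add_cancel hem] at hdw hwne
          set cc := b.repr x e * w⁻¹ with hcc
          set q := x - cc • (X ^ (e - m) * p) with hq
          have hcoeff : ∀ t, b.repr q t = b.repr x t - cc * b.repr (X ^ (e - m) * p) t := by
            intro t
            rw [hq, map_sub, map_smul, Finsupp.sub_apply, Finsupp.smul_apply, smul_eq_mul]
          have hqe : b.repr q e = 0 := by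
            rw [hcoeff, hcc, mul_assoc, inv_mul_cancel₀ hwne, mul_one, sub_self]
          have hqt : ∀ t, e < t → b.repr q t = 0 := by
            intro t ht
            rw [hcoeff, coeff_eq_zero_of_deg_lt b (by omega),
              coeff_eq_zero_of_deg_lt b (by omega), mul_zero, sub_zero]
          have hmemS : cc • (X ^ (e - m) * p) ∈ S := by
            rw [mem_idealToF i hsmul, hsmul, ← mul_assoc]
            exact Ideal.mul_mem_left _ _ (Ideal.subset_span rfl)
          have hqmem : q ∈ S ⊔ W := by
            by_cases hq0 : q = 0
            · rw [hq0]; exact Submodule.zero_mem _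
            · refine ih q ?_
              have h1 : deg b q ≤ e := (deg_le_iff b).mpr hqt
              have h2 : deg b q ≠ e := fun hh => repr_deg_ne_zero b hq0 (hh ▸ hqe)
              omega
          have : x = q + cc • (X ^ (e - m) * p) := by rw [hq, sub_add_cancel]
          rw [this]
          exact Submodule.add_mem _ hqmem (Submodule.mem_sup_left hmemS)
    exact main (deg b x + 1) x (by omega)

include hb hcomm in
lemma finrank_quot {p : R} (hp : p ≠ 0) :
    FiniteDimensional F (R ⧸ idealToF i hsmul (Ideal.span {p})) ∧
      Module.finrank F (R ⧸ idealToF i hsmul (Ideal.span {p})) = deg b p := by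
  set m := deg b p with hm
  have hcompl := span_isCompl σ δ i X b hsmul hb hcomm hp
  have e := Submodule.quotientEquivOfIsCompl _ _ hcompl
  have himg : b '' Set.Iio m = Set.range (⇑b ∘ (Fin.val : Fin m → ℕ)) := by
    ext y
    constructor
    · rintro ⟨n, hn, rfl⟩
      exact ⟨⟨n, hn⟩, rfl⟩
    · rintro ⟨⟨n, hn⟩, rfl⟩
      exact ⟨n, hn, rfl⟩
  have hfinW : FiniteDimensional F (Submodule.span F (b '' Set.Iio m)) :=
    FiniteDimensional.span_of_finite F ((Set.finite_Iio m).image b)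
  have hfrW : Module.finrank F (Submodule.span F (b '' Set.Iio m)) = m := by
    rw [himg, finrank_span_eq_card (b.linearIndependent.comp _ Fin.val_injective)]
    simp
  exact ⟨Module.Finite.equiv e.symm, by rw [e.finrank_eq, hfrW]⟩

end Codim

section Main
variable [DivisionRing F] [Ring R] [Module F R]

lemma ne_zero_of_deg_pos (b : Module.Basis ℕ F R) {p : R} (hp : 0 < deg b p) : p ≠ 0 := by
  rintro rfl; simp [deg] at hp

lemma idealToF_inf (i : F →+* R) (hsmul : ∀ (a : F) (r : R), a • r = i a * r)
    (I J : Ideal R) : idealToF i hsmul (I ⊓ J) = idealToF i hsmul I ⊓ idealToF i hsmul J := by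
  ext x
  simp [mem_idealToF, Submodule.mem_inf]

lemma idealToF_sup (i : F →+* R) (hsmul : ∀ (a : F) (r : R), a • r = i a * r)
    (I J : Ideal R) : idealToF i hsmul (I ⊔ J) = idealToF i hsmul I ⊔ idealToF i hsmul J := by
  ext x
  rw [mem_idealToF i hsmul, Submodule.mem_sup, Submodule.mem_sup]
  simp only [mem_idealToF]

end Main

/-- If `Rf ∩ Rg = Rh` and `Rf + Rg = Rk`, then
`deg f + deg g = deg h + deg k`. -/
theorem deg_add_of_inf_sup [DivisionRing F] [Ring R] [Module F R]
    (σ : F →+* F) (δ : F →+ F)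
    (hδ : ∀ a b : F, δ (a * b) = σ a * δ b + δ a * b)
    (i : F →+* R) (X : R)
    (hsmul : ∀ (a : F) (r : R), a • r = i a * r)
    (b : Module.Basis ℕ F R) (hb : ∀ n : ℕ, b n = X ^ n)
    (hcomm : ∀ a : F, X * i a = i (σ a) * X + i (δ a))
    (f g h k : R) (hf : 0 < deg b f) (hg : 0 < deg b g) (hh : h ≠ 0) (hk : k ≠ 0)
    (hinf : Ideal.span {f} ⊓ Ideal.span {g} = Ideal.span {h})
    (hsup : Ideal.span {f} ⊔ Ideal.span {g} = Ideal.span {k}) :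
    deg b f + deg b g = deg b h + deg b k := by
  have hf0 : f ≠ 0 := ne_zero_of_deg_pos b hf
  have hg0 : g ≠ 0 := ne_zero_of_deg_pos b hg
  set Sf := idealToF i hsmul (Ideal.span {f}) with hSf
  set Sg := idealToF i hsmul (Ideal.span {g}) with hSg
  set Sh := idealToF i hsmul (Ideal.span {h}) with hSh
  set Sk := idealToF i hsmul (Ideal.span {k}) with hSk
  have hShfg : Sh = Sf ⊓ Sg := by
    rw [hSh, ← hinf, idealToF_inf]
  have hSkfg : Sf ⊔ Sg = Sk := by
    rw [hSk, ← hsup, idealToF_sup]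
  have hlef : Sh ≤ Sf := hShfg ▸ inf_le_left
  have hleg : Sh ≤ Sg := hShfg ▸ inf_le_right
  have hlek : Sh ≤ Sk := hlef.trans (hSkfg ▸ le_sup_left)
  obtain ⟨instQ, hch⟩ := finrank_quot σ δ i X b hsmul hb hcomm hh
  obtain ⟨_, hcf⟩ := finrank_quot σ δ i X b hsmul hb hcomm hf0
  obtain ⟨_, hcg⟩ := finrank_quot σ δ i X b hsmul hb hcomm hg0
  obtain ⟨_, hck⟩ := finrank_quot σ δ i X b hsmul hb hcomm hk
  set A := Submodule.map Sh.mkQ Sf with hA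
  set B := Submodule.map Sh.mkQ Sg with hB
  set K := Submodule.map Sh.mkQ Sk with hK
  have hABinf : A ⊓ B = ⊥ := by
    rw [eq_bot_iff]
    rintro x ⟨hxA, hxB⟩
    simp only [SetLike.mem_coe] at hxA hxB
    obtain ⟨u, hu, hux⟩ := Submodule.mem_map.mp hxA
    obtain ⟨v, hv, hvx⟩ := Submodule.mem_map.mp hxB
    have huv : u - v ∈ Sh := by
      rw [← Submodule.Quotient.mk_eq_zero, ← Submodule.mkQ_apply, map_sub, hux, hvx, sub_self]
    have hu2 : u ∈ Sg := by
      have : u = v + (u - v) := by abel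
      rw [this]
      exact Sg.add_mem hv (hleg huv)
    have : u ∈ Sh := hShfg ▸ Submodule.mem_inf.mpr ⟨hu, hu2⟩
    simp only [Submodule.mem_bot, ← hux, Submodule.mkQ_apply, Submodule.Quotient.mk_eq_zero]
    exact this
  have hABsup : A ⊔ B = K := by
    rw [hA, hB, ← Submodule.map_sup, hSkfg]
  have e4 := Submodule.finrank_sup_add_finrank_inf_eq A B
  rw [hABinf, hABsup, finrank_bot] at e4
  have eA := Submodule.finrank_quotient_add_finrank A
  have eB := Submodule.finrank_quotient_add_finrank B
  have eK := Submodule.finrank_quotient_add_finrank K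
  have qA : Module.finrank F ((R ⧸ Sh) ⧸ A) = Module.finrank F (R ⧸ Sf) :=
    (Submodule.quotientQuotientEquivQuotient Sh Sf hlef).finrank_eq
  have qB : Module.finrank F ((R ⧸ Sh) ⧸ B) = Module.finrank F (R ⧸ Sg) :=
    (Submodule.quotientQuotientEquivQuotient Sh Sg hleg).finrank_eq
  have qK : Module.finrank F ((R ⧸ Sh) ⧸ K) = Module.finrank F (R ⧸ Sk) :=
    (Submodule.quotientQuotientEquivQuotient Sh Sk hlek).finrank_eq
  rw [qA, hcf] at eA
  rw [qB, hcg] at eB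
  rw [qK, hck] at eK
  rw [hch] at eA eB eK
  omega
end

section
/- Let F be a division ring, R = F[x;σ,δ], f = Σᵢ aᵢxⁱ ∈ R, and a ∈ F. Define N₀(a) = 1 and Nᵢ(a) = σ(N_{i−1}(a))·a + δ(N_{i−1}(a)). Then the remainder of f upon right division by x − a equals the constant Σᵢ aᵢ·Nᵢ(a). -/
variable {F R : Type*}

/-- Right evaluation: the remainder of `f = Σ aᵢ Xⁱ` upon right division by
`X − a` is the constant `Σ aᵢ Nᵢ(a)`, where `N₀(a) = 1` and
`Nᵢ(a) = σ(Nᵢ₋₁(a))a + δ(Nᵢ₋₁(a))`. -/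
theorem right_evaluation_formula [DivisionRing F] [Ring R] [Module F R]
    (σ : F →+* F) (δ : F →+ F)
    (hδ : ∀ a b : F, δ (a * b) = σ a * δ b + δ a * b)
    (i : F →+* R) (X : R)
    (hsmul : ∀ (a : F) (r : R), a • r = i a * r)
    (b : Module.Basis ℕ F R) (hb : ∀ n : ℕ, b n = X ^ n)
    (hcomm : ∀ a : F, X * i a = i (σ a) * X + i (δ a))
    (a : F) (N : ℕ → F) (hN0 : N 0 = 1)
    (hNs : ∀ k : ℕ, N (k + 1) = σ (N k) * a + δ (N k))
    (f : R) :
    ∃ q : R, f = q * (X - i a) + i (∑ k ∈ (b.repr f).support, b.repr f k * N k) := by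
  have key : ∀ n : ℕ, ∃ q : R, X ^ n = q * (X - i a) + i (N n) := by
    intro n
    induction n with
    | zero => exact ⟨0, by simp [hN0]⟩
    | succ n ih =>
      obtain ⟨q, hq⟩ := ih
      refine ⟨X * q + i (σ (N n)), ?_⟩
      rw [pow_succ', hq, mul_add, hcomm, hNs, map_add, map_mul]
      noncomm_ring
  choose q hq using key
  refine ⟨∑ k ∈ (b.repr f).support, i (b.repr f k) * q k, ?_⟩
  have hf : f = ∑ k ∈ (b.repr f).support, i (b.repr f k) * X ^ k := by
    conv_lhs => rw [← b.linearCombination_repr f]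
    rw [Finsupp.linearCombination_apply, Finsupp.sum]
    exact Finset.sum_congr rfl fun k _ => by rw [hsmul, hb]
  conv_lhs => rw [hf]
  rw [Finset.sum_mul, map_sum, ← Finset.sum_add_distrib]
  refine Finset.sum_congr rfl fun k _ => ?_
  rw [hq k, mul_add, mul_assoc, map_mul]
end

section
/- Let F be a division ring and R = F[x;σ,δ]. For f, g ∈ R and a ∈ F with right evaluations f(·), g(·) defined via right division by x − a: if g(a) = 0 then (f·g)(a) = 0, and if g(a) ≠ 0 then (f·g)(a) = f(a^{g(a)})·g(a), where a^{c} := σ(c)·a·c⁻¹ + δ(c)·c⁻¹ for c ∈ F*. -/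
variable {F R : Type*}

/-- Product formula for right evaluation: if `g(a) = 0` then `(fg)(a) = 0`;
if `g(a) ≠ 0` then `(fg)(a) = f(a^{g(a)}) g(a)`, where
`a^c = σ(c)ac⁻¹ + δ(c)c⁻¹`. -/
theorem right_evaluation_of_product [DivisionRing F] [Ring R] [Module F R]
    (σ : F →+* F) (δ : F →+ F)
    (hδ : ∀ a b : F, δ (a * b) = σ a * δ b + δ a * b)
    (i : F →+* R) (X : R)
    (hsmul : ∀ (a : F) (r : R), a • r = i a * r)
    (b : Module.Basis ℕ F R) (hb : ∀ n : ℕ, b n = X ^ n)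
    (hcomm : ∀ a : F, X * i a = i (σ a) * X + i (δ a))
    (ev : F → R → F)
    (hev : ∀ (a : F) (h : R), ∃ q : R, h = q * (X - i a) + i (ev a h))
    (a : F) (f g : R) :
    (ev a g = 0 → ev a (f * g) = 0) ∧
    (ev a g ≠ 0 → ev a (f * g) =
      ev (σ (ev a g) * a * (ev a g)⁻¹ + δ (ev a g) * (ev a g)⁻¹) f * ev a g) := by
  classical
  have h1 : (1 : R) = b 0 := by rw [hb 0, pow_zero]
  have hid : ∀ d : F, i d = d • b 0 := by
    intro d; rw [hsmul, ← h1, mul_one]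
  have hrepr_i : ∀ d : F, b.repr (i d) = Finsupp.single 0 d := by
    intro d
    rw [hid, map_smul, b.repr_self, Finsupp.smul_single, smul_eq_mul, mul_one]
  have hsum : ∀ r : R, r = (b.repr r).sum fun n cc => cc • b n := by
    intro r
    conv_lhs => rw [← b.linearCombination_repr r]
    rw [Finsupp.linearCombination_apply]
  have hXsmul : ∀ (cc : F) (n : ℕ), X * (cc • b n) = σ cc • b (n+1) + δ cc • b n := by
    intro cc n
    rw [hsmul cc, hb, ← mul_assoc, hcomm, add_mul, mul_assoc, ← pow_succ', ← hb, ← hb,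
      ← hsmul, ← hsmul]
  have hXdeg : ∀ (r : R) (k : ℕ), (∀ m, k < m → b.repr r m = 0) →
      ∀ m, k + 1 < m → b.repr (X * r) m = 0 := by
    intro r k hk m hm
    have hsupp : ∀ n ∈ (b.repr r).support, n ≤ k := by
      intro n hn
      by_contra hc
      exact (Finsupp.mem_support_iff.mp hn) (hk n (lt_of_not_ge hc))
    conv_lhs => rw [hsum r, Finsupp.mul_sum]
    simp only [hXsmul]
    rw [Finsupp.sum, map_sum, Finset.sum_apply']
    refine Finset.sum_eq_zero fun n hn => ?_
    have hnk := hsupp n hn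
    rw [map_add, map_smul, map_smul, b.repr_self, b.repr_self, Finsupp.add_apply,
      Finsupp.smul_apply, Finsupp.smul_apply, Finsupp.single_apply, Finsupp.single_apply,
      if_neg (by omega), if_neg (by omega), smul_zero, smul_zero, add_zero]
  have hXn : ∀ (aa : F) (n : ℕ), ∀ m, n < m → b.repr (X ^ n * i aa) m = 0 := by
    intro aa n
    induction n with
    | zero =>
      intro m hm
      rw [pow_zero, one_mul, hrepr_i, Finsupp.single_apply, if_neg (by omega)]
    | succ k ih =>
      intro m hm
      rw [pow_succ', mul_assoc]
      exact hXdeg _ k ih m hm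
  have hbX : ∀ n, b n * X = b (n+1) := fun n => by rw [hb, hb, pow_succ]
  have hsm : ∀ (cc : F) (r s : R), (cc • r) * s = cc • (r * s) := by
    intro cc r s; rw [hsmul, hsmul, mul_assoc]
  -- uniqueness of the remainder
  have key : ∀ (aa : F) (p : R) (d : F), p * (X - i aa) = i d → d = 0 := by
    intro aa p d hpd
    by_cases hp : p = 0
    · subst hp
      rw [zero_mul] at hpd
      have := congrArg (fun r => b.repr r 0) hpd.symm
      simpa [hrepr_i] using this
    · exfalso
      have hne : (b.repr p).support.Nonempty := by
        rw [Finsupp.support_nonempty_iff]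
        simpa using hp
      set N := (b.repr p).support.max' hne with hNdef
      have hNmem := (b.repr p).support.max'_mem hne
      have hN1 : b.repr p N ≠ 0 := Finsupp.mem_support_iff.mp hNmem
      have hN2 : ∀ n ∈ (b.repr p).support, n ≤ N := fun n hn => Finset.le_max' _ n hn
      have e1 : b.repr (p * X) (N+1) = b.repr p N := by
        conv_lhs => rw [hsum p, Finsupp.sum_mul]
        rw [Finsupp.sum, map_sum, Finset.sum_apply']
        simp only [hsm, hbX, map_smul, b.repr_self, Finsupp.smul_apply,
          Finsupp.single_apply, smul_eq_mul, mul_one, add_left_inj]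
        simp only [mul_ite, mul_one, mul_zero]
        rw [Finset.sum_ite_eq' _ N, if_pos hNmem]
      have e2 : b.repr (p * i aa) (N+1) = 0 := by
        conv_lhs => rw [hsum p, Finsupp.sum_mul]
        rw [Finsupp.sum, map_sum, Finset.sum_apply']
        refine Finset.sum_eq_zero fun n hn => ?_
        rw [hsm, map_smul, Finsupp.smul_apply, hb,
          hXn aa n (N+1) (by have := hN2 n hn; omega), smul_zero]
      have e3 := congrArg (fun r => b.repr r (N+1)) hpd
      simp only [mul_sub, map_sub, Finsupp.sub_apply] at e3
      rw [e1, e2, sub_zero, hrepr_i, Finsupp.single_apply, if_neg (by omega)] at e3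
      exact hN1 e3
  constructor
  · intro hg0
    obtain ⟨q, hq⟩ := hev a g
    obtain ⟨Q, hQ⟩ := hev a (f * g)
    rw [hg0, map_zero, add_zero] at hq
    have h' : (f * q - Q) * (X - i a) = i (ev a (f * g)) := by
      rw [sub_mul, mul_assoc, ← hq]
      conv_lhs => rw [hQ]
      rw [add_sub_cancel_left]
    exact key a _ _ h'
  · intro hg0
    obtain ⟨q, hq⟩ := hev a g
    set cc := ev a g with hcc
    set a' := σ cc * a * cc⁻¹ + δ cc * cc⁻¹ with ha'
    obtain ⟨p, hp⟩ := hev a' f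
    obtain ⟨Q, hQ⟩ := hev a (f * g)
    have hkey : (X - i a') * i cc = i (σ cc) * (X - i a) := by
      have hac : a' * cc = σ cc * a + δ cc := by
        rw [ha', add_mul, mul_assoc, inv_mul_cancel₀ hg0, mul_one, mul_assoc,
          inv_mul_cancel₀ hg0, mul_one]
      rw [sub_mul, hcomm, ← map_mul, hac, map_add, map_mul, mul_sub]
      abel
    have hficc : f * i cc = p * i (σ cc) * (X - i a) + i (ev a' f * cc) := by
      conv_lhs => rw [hp]
      rw [add_mul, mul_assoc, hkey, ← mul_assoc, ← map_mul]
    have hfg : f * g = (f * q + p * i (σ cc)) * (X - i a) + i (ev a' f * cc) := by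
      conv_lhs => rw [hq, mul_add, hficc, ← mul_assoc]
      rw [add_mul, ← add_assoc]
    have heq : (f * q + p * i (σ cc)) * (X - i a) + i (ev a' f * cc)
        = Q * (X - i a) + i (ev a (f * g)) := by rw [← hfg]; exact hQ
    have h2 : (f * q + p * i (σ cc) - Q) * (X - i a)
        = i (ev a (f * g) - ev a' f * cc) := by
      rw [sub_mul, map_sub, sub_eq_sub_iff_add_eq_add, heq, add_comm]
    have := key a _ _ h2
    have := sub_eq_zero.mp this
    rw [this]
end
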